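/- Explicit realization of a hockey-stick curve: let H : ℝ_{≥0} → ℝ be convex, nonincreasing, with H(0) = 1 and H(α) ≥ (1 − α)₊ for all α ≥ 0. Define the conjugate H*(y) = sup_{α ≥ 0} (y·α − H(α)). Let Q be the uniform distribution on [0,1], and let P be the probability measure on ℝ whose cumulative distribution function is F_P(x) = 0 for x < 0, F_P(x) = 1 + H*(x − 1) for x ∈ [0,1), and F_P(x) = 1 for x ≥ 1 (so P may have an atom at 1). Then P is a well-defined probability measure and H_α(P‖Q) = H(α) for all α ≥ 0. -/

import Mathlib

open MeasureTheory

/-- The hockey-stick divergence `H_α(P‖Q) = ∫ (p − α·q)₊ dμ` with `μ = P + Q`. -/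
noncomputable def hockeyStick {Ω : Type*} [MeasurableSpace Ω] (α : ℝ) (P Q : Measure Ω) : ℝ :=
  ∫ ω, max ((P.rnDeriv (P + Q) ω).toReal - α * (Q.rnDeriv (P + Q) ω).toReal) 0 ∂(P + Q)

/-- The conjugate `H*(y) = sup_{α ≥ 0} (y·α − H(α))`. -/
noncomputable def fenchelNonneg (H : ℝ → ℝ) (y : ℝ) : ℝ :=
  sSup {r : ℝ | ∃ α : ℝ, 0 ≤ α ∧ r = y * α - H α}

open Set Filter Topology


section fenchel

variable {H : ℝ → ℝ}

lemma fn_nonempty (y : ℝ) : {r : ℝ | ∃ α : ℝ, 0 ≤ α ∧ r = y * α - H α}.Nonempty :=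
  ⟨y * 0 - H 0, 0, le_rfl, rfl⟩

lemma fn_le {y c : ℝ} (hc : ∀ α : ℝ, 0 ≤ α → y * α - H α ≤ c) :
    fenchelNonneg H y ≤ c :=
  csSup_le (fn_nonempty y) (by rintro r ⟨α, hα, rfl⟩; exact hc α hα)

variable (hlb : ∀ α : ℝ, 0 ≤ α → max (1 - α) 0 ≤ H α)

include hlb

lemma fn_bdd {y : ℝ} (hy : y ≤ 0) :
    BddAbove {r : ℝ | ∃ α : ℝ, 0 ≤ α ∧ r = y * α - H α} := by
  refine ⟨0, ?_⟩
  rintro r ⟨α, hα, rfl⟩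
  have h1 : (0:ℝ) ≤ H α := le_trans (le_max_right _ _) (hlb α hα)
  have h2 : y * α ≤ 0 := mul_nonpos_iff.2 (Or.inr ⟨hy, hα⟩)
  linarith

lemma le_fn {y : ℝ} (hy : y ≤ 0) {α : ℝ} (hα : 0 ≤ α) :
    y * α - H α ≤ fenchelNonneg H y :=
  le_csSup (fn_bdd hlb hy) ⟨α, hα, rfl⟩

lemma fn_nonpos {y : ℝ} (hy : y ≤ 0) : fenchelNonneg H y ≤ 0 := by
  refine fn_le ?_
  intro α hα
  have h1 : (0:ℝ) ≤ H α := le_trans (le_max_right _ _) (hlb α hα)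
  have h2 : y * α ≤ 0 := mul_nonpos_iff.2 (Or.inr ⟨hy, hα⟩)
  linarith

lemma neg_one_le_fn (h0 : H 0 = 1) {y : ℝ} (hy : y ≤ 0) : -1 ≤ fenchelNonneg H y := by
  have := le_fn hlb hy (le_refl (0:ℝ))
  simpa [h0] using this

lemma fn_of_le_neg_one (h0 : H 0 = 1) {y : ℝ} (hy : y ≤ -1) : fenchelNonneg H y = -1 := by
  refine le_antisymm (fn_le ?_) (neg_one_le_fn hlb h0 (by linarith))
  intro α hα
  have h1 : 1 - α ≤ H α := le_trans (le_max_left _ _) (hlb α hα)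
  nlinarith

lemma fn_mono : MonotoneOn (fenchelNonneg H) (Iic (0:ℝ)) := by
  intro y1 h1 y2 h2 h12
  refine fn_le ?_
  intro α hα
  have : y1 * α ≤ y2 * α := mul_le_mul_of_nonneg_right h12 hα
  exact le_trans (by linarith) (le_fn hlb h2 hα)

lemma fn_convex : ConvexOn ℝ (Iic (0:ℝ)) (fenchelNonneg H) := by
  refine ⟨convex_Iic 0, ?_⟩
  intro y1 h1 y2 h2 a b ha hb hab
  refine fn_le ?_
  intro α hα
  have e1 := le_fn hlb (mem_Iic.1 h1) hα
  have e2 := le_fn hlb (mem_Iic.1 h2) hα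
  have : (a • y1 + b • y2) * α - H α
      = a * (y1 * α - H α) + b * (y2 * α - H α) := by
    simp only [smul_eq_mul]; linear_combination (H α) * hab
  rw [this]
  have := add_le_add (mul_le_mul_of_nonneg_left e1 ha) (mul_le_mul_of_nonneg_left e2 hb)
  simpa [smul_eq_mul] using this

lemma fn_continuousAt {y : ℝ} (hy : y < 0) : ContinuousAt (fenchelNonneg H) y := by
  have hc : ConvexOn ℝ (Iio (0:ℝ)) (fenchelNonneg H) :=
    (fn_convex hlb).subset Iio_subset_Iic_self (convex_Iio 0)
  exact (hc.continuousOn isOpen_Iio).continuousAt (Iio_mem_nhds hy)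

lemma fn_tendsto_zero :
    Tendsto (fenchelNonneg H) (nhdsWithin 0 (Iio 0)) (nhds (fenchelNonneg H 0)) := by
  rw [tendsto_order]
  constructor
  · intro c hc
    obtain ⟨r, ⟨α, hα, rfl⟩, hr⟩ :=
      exists_lt_of_lt_csSup (fn_nonempty (H := H) 0) hc
    have htd : Tendsto (fun y : ℝ => y * α - H α) (nhdsWithin 0 (Iio 0))
        (nhds (0 * α - H α)) := by
      exact ((continuous_id.mul continuous_const).sub continuous_const).continuousAt.tendsto.mono_left nhdsWithin_le_nhds
    have := htd.eventually (eventually_gt_nhds hr)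
    filter_upwards [this, self_mem_nhdsWithin] with y hy hy'
    exact lt_of_lt_of_le hy (le_fn hlb (le_of_lt hy') hα)
  · intro c hc
    filter_upwards [self_mem_nhdsWithin] with y hy
    exact lt_of_le_of_lt (fn_mono hlb (Set.mem_Iic.2 (le_of_lt hy)) (Set.mem_Iic.2 le_rfl) (le_of_lt hy)) hc

end fenchel


section subgrad
variable {H : ℝ → ℝ}

lemma subgrad_exists (hconv : ConvexOn ℝ (Set.Ici (0:ℝ)) H)
    (hanti : AntitoneOn H (Set.Ici (0:ℝ))) (h0 : H 0 = 1)
    (hlb : ∀ α : ℝ, 0 ≤ α → max (1 - α) 0 ≤ H α)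
    {α : ℝ} (hα : 0 ≤ α) :
    ∃ y : ℝ, -1 ≤ y ∧ y ≤ 0 ∧ ∀ β, 0 ≤ β → H α + y * (β - α) ≤ H β := by
  set S : Set ℝ := (fun β => (H β - H α) / (β - α)) '' Ioi α with hS
  have hne : S.Nonempty := ⟨_, ⟨α + 1, by simp, rfl⟩⟩
  have hbdd : ∀ r ∈ S, -1 ≤ r := by
    rintro r ⟨β, hβ, rfl⟩
    have hβα : α < β := hβ
    have hβpos : 0 < β := lt_of_le_of_lt hα hβα
    have hsec := hconv.secant_mono (a := β) (x := (0:ℝ)) (y := α)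
      (mem_Ici.2 (le_of_lt hβpos)) (mem_Ici.2 le_rfl) (mem_Ici.2 hα)
      (ne_of_lt hβpos) (ne_of_lt hβα) hα
    have e1 : (H 0 - H β) / (0 - β) = (H β - 1) / β := by
      rw [h0, show (0:ℝ) - β = -(β) by ring, ← neg_div_neg_eq]
      ring_nf
    have e2 : (H α - H β) / (α - β) = (H β - H α) / (β - α) := by
      rw [show α - β = -(β - α) by ring, ← neg_div_neg_eq]
      ring_nf
    rw [e1, e2] at hsec
    refine le_trans ?_ hsec
    rw [le_div_iff₀ hβpos]
    have := le_trans (le_max_left _ _) (hlb β (le_of_lt hβpos))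
    linarith
  have hbddBelow : BddBelow S := ⟨-1, fun r hr => hbdd r hr⟩
  set y := sInf S with hy
  have hy_neg1 : -1 ≤ y := le_csInf hne hbdd
  have hy0 : y ≤ 0 := by
    have h1 : y ≤ (H (α + 1) - H α) / (α + 1 - α) :=
      csInf_le hbddBelow ⟨α + 1, by simp, rfl⟩
    have h2 : H (α + 1) ≤ H α :=
      hanti (mem_Ici.2 hα) (mem_Ici.2 (by linarith)) (by linarith)
    have h3 : (H (α + 1) - H α) / (α + 1 - α) ≤ 0 := by
      rw [show α + 1 - α = (1:ℝ) by ring]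
      simpa using h2
    linarith
  refine ⟨y, hy_neg1, hy0, ?_⟩
  intro β hβ
  rcases lt_trichotomy β α with hlt | heq | hgt
  · have hlow : (H β - H α) / (β - α) ≤ y := by
      refine le_csInf hne ?_
      rintro r ⟨γ, hγ, rfl⟩
      exact hconv.secant_mono (a := α) (mem_Ici.2 hα) (mem_Ici.2 hβ)
        (mem_Ici.2 (le_trans hα (le_of_lt hγ))) (ne_of_lt hlt) (ne_of_gt hγ)
        (le_trans (le_of_lt hlt) (le_of_lt hγ))
    have hne' : β - α ≠ 0 := by linarith
    have : y * (β - α) ≤ (H β - H α) / (β - α) * (β - α) :=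
      mul_le_mul_of_nonpos_right hlow (by linarith)
    rw [div_mul_cancel₀ _ hne'] at this
    linarith
  · subst heq; simp
  · have hup : y ≤ (H β - H α) / (β - α) := csInf_le hbddBelow ⟨β, hgt, rfl⟩
    have hpos : 0 < β - α := by linarith
    have : y * (β - α) ≤ (H β - H α) / (β - α) * (β - α) :=
      mul_le_mul_of_nonneg_right hup (le_of_lt hpos)
    rw [div_mul_cancel₀ _ (ne_of_gt hpos)] at this
    linarith

end subgrad


section F
variable {H : ℝ → ℝ}

noncomputable def Fcdf (H : ℝ → ℝ) : ℝ → ℝ := fun x =>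
  if x < 0 then 0 else if x < 1 then 1 + fenchelNonneg H (x - 1) else 1

lemma Fcdf_of_neg {x : ℝ} (h : x < 0) : Fcdf H x = 0 := if_pos h

lemma Fcdf_of_mid {x : ℝ} (h1 : 0 ≤ x) (h2 : x < 1) :
    Fcdf H x = 1 + fenchelNonneg H (x - 1) :=
  (if_neg (not_lt.2 h1)).trans (if_pos h2)

lemma Fcdf_of_ge {x : ℝ} (h : 1 ≤ x) : Fcdf H x = 1 :=
  (if_neg (not_lt.2 (le_trans (by norm_num) h))).trans (if_neg (not_lt.2 h))

variable (hlb : ∀ α : ℝ, 0 ≤ α → max (1 - α) 0 ≤ H α) (h0 : H 0 = 1)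
include hlb h0

lemma Fcdf_nonneg (x : ℝ) : 0 ≤ Fcdf H x := by
  rcases lt_or_ge x 0 with h | h
  · rw [Fcdf_of_neg h]
  rcases lt_or_ge x 1 with h1 | h1
  · rw [Fcdf_of_mid h h1]
    have : fenchelNonneg H (-1) ≤ fenchelNonneg H (x - 1) :=
      fn_mono hlb (Set.mem_Iic.2 (by norm_num)) (Set.mem_Iic.2 (by linarith)) (by linarith)
    rw [fn_of_le_neg_one hlb h0 le_rfl] at this
    linarith
  · rw [Fcdf_of_ge h1]; norm_num

omit h0 in
lemma Fcdf_le_one (x : ℝ) : Fcdf H x ≤ 1 := by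
  rcases lt_or_ge x 0 with h | h
  · rw [Fcdf_of_neg h]; norm_num
  rcases lt_or_ge x 1 with h1 | h1
  · rw [Fcdf_of_mid h h1]
    have := fn_nonpos hlb (show x - 1 ≤ 0 by linarith)
    linarith
  · rw [Fcdf_of_ge h1]

lemma Fcdf_mono : Monotone (Fcdf H) := by
  intro x y hxy
  rcases lt_or_ge y 0 with hy | hy
  · have hx : x < 0 := lt_of_le_of_lt hxy hy
    rw [Fcdf_of_neg hx, Fcdf_of_neg hy]
  rcases lt_or_ge y 1 with hy1 | hy1
  · rcases lt_or_ge x 0 with hx | hx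
    · rw [Fcdf_of_neg hx]
      exact Fcdf_nonneg hlb h0 y
    · have hx1 : x < 1 := lt_of_le_of_lt hxy hy1
      rw [Fcdf_of_mid hx hx1, Fcdf_of_mid hy hy1]
      have := fn_mono hlb (Set.mem_Iic.2 (show x - 1 ≤ 0 by linarith))
        (Set.mem_Iic.2 (show y - 1 ≤ 0 by linarith)) (by linarith)
      linarith
  · rw [Fcdf_of_ge hy1]
    exact Fcdf_le_one hlb x

lemma Fcdf_right_continuous (x : ℝ) : ContinuousWithinAt (Fcdf H) (Ici x) x := by
  rcases lt_or_ge x 0 with hx | hx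
  · have hev : Fcdf H =ᶠ[nhds x] fun _ => 0 := by
      filter_upwards [Iio_mem_nhds hx] with y hy
      exact Fcdf_of_neg hy
    exact (continuousAt_const.congr hev.symm).continuousWithinAt
  rcases lt_or_ge x 1 with hx1 | hx1
  · have hg : ContinuousWithinAt (fun y => 1 + fenchelNonneg H (y - 1)) (Ici x) x := by
      refine ContinuousWithinAt.add continuousWithinAt_const ?_
      have : ContinuousAt (fenchelNonneg H) (x - 1) := fn_continuousAt hlb (by linarith)
      have hinner : ContinuousAt (fun y : ℝ => y - 1) x := by fun_prop
      have hcomp : ContinuousAt (fun y : ℝ => fenchelNonneg H (y - 1)) x :=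
        ContinuousAt.comp (f := fun y : ℝ => y - 1) (x := x) this hinner
      exact hcomp.continuousWithinAt
    refine hg.congr_of_eventuallyEq ?_ ?_
    · filter_upwards [nhdsWithin_le_nhds (Iio_mem_nhds hx1), self_mem_nhdsWithin] with y hy hy'
      exact Fcdf_of_mid (le_trans hx hy') (mem_Iio.1 hy)
    · exact Fcdf_of_mid hx hx1
  · have hev : ∀ y ∈ Ici x, Fcdf H y = 1 := by
      intro y hy
      exact Fcdf_of_ge (le_trans hx1 hy)
    refine continuousWithinAt_const.congr hev ?_
    exact Fcdf_of_ge hx1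

noncomputable def Fst (hlb : ∀ α : ℝ, 0 ≤ α → max (1 - α) 0 ≤ H α) (h0 : H 0 = 1) :
    StieltjesFunction ℝ where
  toFun := Fcdf H
  mono' := Fcdf_mono hlb h0
  right_continuous' := Fcdf_right_continuous hlb h0

lemma Fst_tendsto_atBot : Tendsto (Fst hlb h0) atBot (nhds 0) := by
  refine Tendsto.congr' ?_ tendsto_const_nhds
  filter_upwards [eventually_lt_atBot (0:ℝ)] with y hy
  exact (Fcdf_of_neg hy).symm

lemma Fst_tendsto_atTop : Tendsto (Fst hlb h0) atTop (nhds 1) := by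
  refine Tendsto.congr' ?_ tendsto_const_nhds
  filter_upwards [eventually_ge_atTop (1:ℝ)] with y hy
  exact (Fcdf_of_ge hy).symm

end F


section comparison

variable (f : StieltjesFunction ℝ) {a b : ℝ}

noncomputable def clampSt (a b : ℝ) : ℝ → ℝ := fun x => max a (min x b)

lemma clampSt_mono (a b : ℝ) : Monotone (clampSt a b) := fun _ _ hxy =>
  max_le_max le_rfl (min_le_min hxy le_rfl)

lemma clampSt_continuous (a b : ℝ) : Continuous (clampSt a b) :=
  continuous_const.max ((continuous_id.min continuous_const))

lemma clampSt_mem (hab : a ≤ b) (x : ℝ) : a ≤ clampSt a b x ∧ clampSt a b x ≤ b :=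
  ⟨le_max_left _ _, max_le hab (min_le_right _ _)⟩

lemma clampSt_of_mem (hab : a ≤ b) {x : ℝ} (hax : a ≤ x) (hxb : x ≤ b) :
    clampSt a b x = x := by
  unfold clampSt
  rw [min_eq_left hxb, max_eq_right hax]

noncomputable def stClampAux (φ : ℝ → ℝ) (a b : ℝ)
    (hmono : ∀ x y, a ≤ x → x ≤ y → y ≤ b → φ x ≤ φ y)
    (hrc : ∀ x, ContinuousWithinAt φ (Ici x) x) (hab : a ≤ b) :
    StieltjesFunction ℝ where
  toFun := fun x => φ (clampSt a b x)
  mono' := by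
    intro x y hxy
    have hcx := clampSt_mem (a := a) (b := b) hab x
    have hcy := clampSt_mem (a := a) (b := b) hab y
    exact hmono _ _ hcx.1 (clampSt_mono a b hxy) hcy.2
  right_continuous' := by
    intro x
    refine ContinuousWithinAt.comp (hrc (clampSt a b x))
      (clampSt_continuous a b).continuousWithinAt ?_
    intro y hy
    exact clampSt_mono a b hy

lemma stieltjes_le_on {α : ℝ} (hα : 0 ≤ α) (hab : a ≤ b)
    (hslope : ∀ x y, a ≤ x → x ≤ y → y ≤ b → f y - f x ≤ α * (y - x))
    {B : Set ℝ} (hB : B ⊆ Ioc a b) :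
    f.measure B ≤ ENNReal.ofReal α * volume B := by
  have hmono : ∀ x y, a ≤ x → x ≤ y → y ≤ b → α * x - f x ≤ α * y - f y := by
    intro x y hx hxy hyb
    have := hslope x y hx hxy hyb
    linarith
  have hrc : ∀ x, ContinuousWithinAt (fun z => α * z - f z) (Ici x) x :=
    fun x => ((continuous_const.mul continuous_id).continuousWithinAt).sub
      (f.right_continuous x)
  set g := stClampAux (fun z => α * z - f z) a b hmono hrc hab with hgdef
  have hgval : ∀ x, a ≤ x → x ≤ b → g x = α * x - f x := by
    intro x h1 h2
    show (fun z => α * z - f z) (clampSt a b x) = _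
    rw [clampSt_of_mem hab h1 h2]
  have hIoc : ∀ u v : ℝ, a ≤ u → v ≤ b →
      f.measure (Ioc u v) + g.measure (Ioc u v) = ENNReal.ofReal α * volume (Ioc u v) := by
    intro u v hu hv
    rcases le_or_gt u v with huv | huv
    · rw [StieltjesFunction.measure_Ioc, StieltjesFunction.measure_Ioc,
        hgval u hu (le_trans huv hv), hgval v (le_trans hu huv) hv, Real.volume_Ioc,
        ← ENNReal.ofReal_mul hα,
        ← ENNReal.ofReal_add (by have := f.mono huv; linarith)
          (by have := hslope u v hu huv hv; linarith)]
      congr 1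
      ring
    · rw [Ioc_eq_empty (not_lt.2 huv.le)]
      simp
  haveI h1 : IsFiniteMeasure (f.measure.restrict (Ioc a b)) := by
    constructor
    rw [Measure.restrict_apply_univ, StieltjesFunction.measure_Ioc]
    exact ENNReal.ofReal_lt_top
  haveI h2 : IsFiniteMeasure (g.measure.restrict (Ioc a b)) := by
    constructor
    rw [Measure.restrict_apply_univ, StieltjesFunction.measure_Ioc]
    exact ENNReal.ofReal_lt_top
  have key : f.measure.restrict (Ioc a b) + g.measure.restrict (Ioc a b)
      = (ENNReal.ofReal α • volume).restrict (Ioc a b) := by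
    refine Measure.ext_of_Ioc_finite _ _ ?_ ?_
    · simp only [Measure.add_apply, Measure.restrict_apply_univ, Measure.smul_apply,
        smul_eq_mul]
      exact hIoc a b le_rfl le_rfl
    · intro s t _
      have hint : Ioc s t ∩ Ioc a b = Ioc (max s a) (min t b) := Ioc_inter_Ioc
      simp only [Measure.add_apply, Measure.restrict_apply measurableSet_Ioc, hint,
        Measure.smul_apply, smul_eq_mul]
      exact hIoc _ _ (le_max_right _ _) (min_le_right _ _)
  have hBmeas : f.measure B ≤ (f.measure.restrict (Ioc a b)) B := by
    rw [Measure.restrict_apply' measurableSet_Ioc]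
    exact measure_mono (subset_inter (subset_refl B) hB)
  calc f.measure B ≤ (f.measure.restrict (Ioc a b)) B := hBmeas
    _ ≤ (f.measure.restrict (Ioc a b) + g.measure.restrict (Ioc a b)) B := by
        simp only [Measure.add_apply]; exact le_self_add
    _ = ((ENNReal.ofReal α • volume).restrict (Ioc a b)) B := by rw [key]
    _ ≤ ENNReal.ofReal α * volume B := by
        rw [Measure.restrict_apply' measurableSet_Ioc, Measure.smul_apply, smul_eq_mul]
        exact mul_le_mul_right (measure_mono inter_subset_left) _

lemma stieltjes_ge_on {α : ℝ} (hα : 0 ≤ α) (hab : a ≤ b)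
    (hslope : ∀ x y, a ≤ x → x ≤ y → y ≤ b → α * (y - x) ≤ f y - f x)
    {B : Set ℝ} (hB : B ⊆ Ioc a b) :
    ENNReal.ofReal α * volume B ≤ f.measure B := by
  have hmono : ∀ x y, a ≤ x → x ≤ y → y ≤ b → f x - α * x ≤ f y - α * y := by
    intro x y hx hxy hyb
    have := hslope x y hx hxy hyb
    linarith
  have hrc : ∀ x, ContinuousWithinAt (fun z => f z - α * z) (Ici x) x :=
    fun x => (f.right_continuous x).sub
      ((continuous_const.mul continuous_id).continuousWithinAt)
  set g := stClampAux (fun z => f z - α * z) a b hmono hrc hab with hgdef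
  have hgval : ∀ x, a ≤ x → x ≤ b → g x = f x - α * x := by
    intro x h1 h2
    show (fun z => f z - α * z) (clampSt a b x) = _
    rw [clampSt_of_mem hab h1 h2]
  have hIoc : ∀ u v : ℝ, a ≤ u → v ≤ b →
      (ENNReal.ofReal α * volume (Ioc u v)) + g.measure (Ioc u v) = f.measure (Ioc u v) := by
    intro u v hu hv
    rcases le_or_gt u v with huv | huv
    · rw [StieltjesFunction.measure_Ioc, StieltjesFunction.measure_Ioc,
        hgval u hu (le_trans huv hv), hgval v (le_trans hu huv) hv, Real.volume_Ioc,
        ← ENNReal.ofReal_mul hα,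
        ← ENNReal.ofReal_add (by nlinarith)
          (by have := hslope u v hu huv hv; linarith)]
      congr 1
      ring
    · rw [Ioc_eq_empty (not_lt.2 huv.le)]
      simp
  haveI h2' : IsFiniteMeasure ((ENNReal.ofReal α • (volume : Measure ℝ)).restrict (Ioc a b)) := by
    constructor
    rw [Measure.restrict_apply_univ, Measure.smul_apply, smul_eq_mul, Real.volume_Ioc]
    exact ENNReal.mul_lt_top ENNReal.ofReal_lt_top ENNReal.ofReal_lt_top
  haveI h2 : IsFiniteMeasure (g.measure.restrict (Ioc a b)) := by
    constructor
    rw [Measure.restrict_apply_univ, StieltjesFunction.measure_Ioc]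
    exact ENNReal.ofReal_lt_top
  have key : (ENNReal.ofReal α • volume).restrict (Ioc a b) + g.measure.restrict (Ioc a b)
      = f.measure.restrict (Ioc a b) := by
    refine Measure.ext_of_Ioc_finite _ _ ?_ ?_
    · simp only [Measure.add_apply, Measure.restrict_apply_univ, Measure.smul_apply,
        smul_eq_mul]
      exact hIoc a b le_rfl le_rfl
    · intro s t _
      have hint : Ioc s t ∩ Ioc a b = Ioc (max s a) (min t b) := Ioc_inter_Ioc
      simp only [Measure.add_apply, Measure.restrict_apply measurableSet_Ioc, hint,
        Measure.smul_apply, smul_eq_mul]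
      exact hIoc _ _ (le_max_right _ _) (min_le_right _ _)
  have h3 : ENNReal.ofReal α * volume B = ((ENNReal.ofReal α • volume).restrict (Ioc a b)) B := by
    rw [Measure.restrict_apply' measurableSet_Ioc, Measure.smul_apply, smul_eq_mul,
      inter_eq_self_of_subset_left hB]
  rw [h3]
  calc ((ENNReal.ofReal α • volume).restrict (Ioc a b)) B
      ≤ ((ENNReal.ofReal α • volume).restrict (Ioc a b) + g.measure.restrict (Ioc a b)) B := by
        simp only [Measure.add_apply]; exact le_self_add
    _ = (f.measure.restrict (Ioc a b)) B := by rw [key]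
    _ ≤ f.measure B := by
        rw [Measure.restrict_apply' measurableSet_Ioc]
        exact measure_mono inter_subset_left

end comparison


section hs
variable {Ω : Type*} [MeasurableSpace Ω] (α : ℝ) (P Q : Measure Ω)
  [IsFiniteMeasure P] [IsFiniteMeasure Q]

lemma haccP : P ≪ P + Q := Measure.absolutelyContinuous_of_le (Measure.le_add_right le_rfl)
lemma haccQ : Q ≪ P + Q := Measure.absolutelyContinuous_of_le (Measure.le_add_left le_rfl)

lemma hs_integrand_integrable :
    Integrable (fun ω => (P.rnDeriv (P + Q) ω).toReal - α * (Q.rnDeriv (P + Q) ω).toReal)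
      (P + Q) :=
  (Measure.integrable_toReal_rnDeriv).sub ((Measure.integrable_toReal_rnDeriv).const_mul α)

lemma setint_eq (T : Set Ω) (hT : MeasurableSet T) :
    ∫ ω in T, ((P.rnDeriv (P + Q) ω).toReal - α * (Q.rnDeriv (P + Q) ω).toReal) ∂(P + Q)
      = (P T).toReal - α * (Q T).toReal := by
  rw [integral_sub (Measure.integrable_toReal_rnDeriv.restrict)
    ((Measure.integrable_toReal_rnDeriv.restrict).const_mul α),
    integral_const_mul, Measure.setIntegral_toReal_rnDeriv (haccP P Q) T,
    Measure.setIntegral_toReal_rnDeriv (haccQ P Q) T]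
  rfl

lemma le_hockeyStick (T : Set Ω) (hT : MeasurableSet T) :
    (P T).toReal - α * (Q T).toReal ≤ hockeyStick α P Q := by
  set h : Ω → ℝ := fun ω => (P.rnDeriv (P + Q) ω).toReal - α * (Q.rnDeriv (P + Q) ω).toReal
  have hint : Integrable h (P + Q) := hs_integrand_integrable α P Q
  have hmax_int : Integrable (fun ω => max (h ω) 0) (P + Q) := hint.pos_part
  calc (P T).toReal - α * (Q T).toReal
      = ∫ ω in T, h ω ∂(P + Q) := (setint_eq α P Q T hT).symm
    _ ≤ ∫ ω in T, max (h ω) 0 ∂(P + Q) := by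
        refine integral_mono_ae hint.restrict hmax_int.restrict ?_
        exact Eventually.of_forall fun ω => le_max_left _ _
    _ ≤ ∫ ω, max (h ω) 0 ∂(P + Q) := by
        refine setIntegral_le_integral hmax_int ?_
        exact Eventually.of_forall fun ω => le_max_right _ _
    _ = hockeyStick α P Q := rfl

lemma hockeyStick_le {c : ℝ}
    (hub : ∀ A : Set Ω, MeasurableSet A → (P A).toReal - α * (Q A).toReal ≤ c) :
    hockeyStick α P Q ≤ c := by
  set h : Ω → ℝ := fun ω => (P.rnDeriv (P + Q) ω).toReal - α * (Q.rnDeriv (P + Q) ω).toReal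
    with hh
  set A : Set Ω := {ω | 0 ≤ h ω} with hA
  have hAmeas : MeasurableSet A := by
    apply measurableSet_le measurable_const
    exact ((Measure.measurable_rnDeriv P (P + Q)).ennreal_toReal).sub
      (((Measure.measurable_rnDeriv Q (P + Q)).ennreal_toReal).const_mul α)
  have heq : (fun ω => max (h ω) 0) = A.indicator h := by
    funext ω
    by_cases hω : ω ∈ A
    · rw [indicator_of_mem hω, max_eq_left hω]
    · rw [indicator_of_notMem hω, max_eq_right (le_of_lt (not_le.1 hω))]
  have : hockeyStick α P Q = ∫ ω in A, h ω ∂(P + Q) := by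
    show (∫ ω, max (h ω) 0 ∂(P + Q)) = _
    rw [heq, integral_indicator hAmeas]
  rw [this, setint_eq α P Q A hAmeas]
  exact hub A hAmeas

end hs

/-- Explicit realization of a hockey-stick curve: if `H` is convex, nonincreasing, `H(0) = 1`
and `H(α) ≥ (1−α)₊`, then the probability measure `P` on `ℝ` with CDF `0` for `x < 0`,
`1 + H*(x−1)` for `x ∈ [0,1)` and `1` for `x ≥ 1`, together with `Q` the uniform distribution
on `[0,1]`, satisfies `H_α(P‖Q) = H(α)` for all `α ≥ 0`. -/
theorem explicit_dominating_pair (H : ℝ → ℝ)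
    (hconv : ConvexOn ℝ (Set.Ici (0:ℝ)) H)
    (hanti : AntitoneOn H (Set.Ici (0:ℝ)))
    (h0 : H 0 = 1)
    (hlb : ∀ α : ℝ, 0 ≤ α → max (1 - α) 0 ≤ H α) :
    ∃ P : Measure ℝ, IsProbabilityMeasure P ∧
      (∀ x : ℝ, P (Set.Iic x) =
        ENNReal.ofReal
          (if x < 0 then 0 else if x < 1 then 1 + fenchelNonneg H (x - 1) else 1)) ∧
      ∀ α : ℝ, 0 ≤ α →
        hockeyStick α P (volume.restrict (Set.Icc (0:ℝ) 1)) = H α := by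
  refine ⟨(Fst hlb h0).measure,
    (Fst hlb h0).isProbabilityMeasure (Fst_tendsto_atBot hlb h0) (Fst_tendsto_atTop hlb h0),
    ?_, ?_⟩
  · intro x
    rw [StieltjesFunction.measure_Iic _ (Fst_tendsto_atBot hlb h0) x, sub_zero]
    rfl
  intro α hα
  set Q : Measure ℝ := volume.restrict (Icc (0:ℝ) 1) with hQdef
  set F := Fst hlb h0 with hFdef
  set P := F.measure with hPdef
  haveI hPprob : IsProbabilityMeasure P :=
    F.isProbabilityMeasure (Fst_tendsto_atBot hlb h0) (Fst_tendsto_atTop hlb h0)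
  haveI hQfin : IsFiniteMeasure Q := by
    constructor
    rw [hQdef, Measure.restrict_apply_univ, Real.volume_Icc]
    exact ENNReal.ofReal_lt_top
  have hFapp : ∀ x : ℝ, F x = Fcdf H x := fun x => rfl
  obtain ⟨y, hy1, hy0, hsub⟩ := subgrad_exists hconv hanti h0 hlb hα
  -- conjugate value at the subgradient
  have hfs : fenchelNonneg H y = y * α - H α := by
    refine le_antisymm (fn_le ?_) (le_fn hlb hy0 hα)
    intro β hβ
    have := hsub β hβ
    nlinarith
  have hfn_sub : ∀ z, z ≤ 0 → fenchelNonneg H y + α * (z - y) ≤ fenchelNonneg H z := by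
    intro z hz
    have h1 := le_fn hlb hz hα
    have h2 : y * α - H α + α * (z - y) = z * α - H α := by ring
    rw [hfs, h2]
    exact h1
  have hfn_slope_high : ∀ u v, y ≤ u → u ≤ v → v ≤ 0 →
      α * (v - u) ≤ fenchelNonneg H v - fenchelNonneg H u := by
    intro u v hyu huv hv0
    rcases eq_or_lt_of_le huv with rfl | hlt
    · simp
    have hu0 : u ≤ 0 := by linarith
    have hyv : y < v := lt_of_le_of_lt hyu hlt
    have hsec := (fn_convex hlb).secant_mono (a := v) (x := y) (y := u)
      (mem_Iic.2 hv0) (mem_Iic.2 hy0) (mem_Iic.2 hu0) (ne_of_lt hyv) (ne_of_lt hlt) hyu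
    have e1 : (fenchelNonneg H y - fenchelNonneg H v) / (y - v)
        = (fenchelNonneg H v - fenchelNonneg H y) / (v - y) := by
      rw [show y - v = -(v - y) by ring, show fenchelNonneg H y - fenchelNonneg H v
        = -(fenchelNonneg H v - fenchelNonneg H y) by ring, neg_div_neg_eq]
    have e2 : (fenchelNonneg H u - fenchelNonneg H v) / (u - v)
        = (fenchelNonneg H v - fenchelNonneg H u) / (v - u) := by
      rw [show u - v = -(v - u) by ring, show fenchelNonneg H u - fenchelNonneg H v
        = -(fenchelNonneg H v - fenchelNonneg H u) by ring, neg_div_neg_eq]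
    rw [e1, e2] at hsec
    have h1 : α ≤ (fenchelNonneg H v - fenchelNonneg H y) / (v - y) := by
      rw [le_div_iff₀ (by linarith : (0:ℝ) < v - y)]
      have := hfn_sub v hv0
      nlinarith
    have h2 := le_trans h1 hsec
    rw [le_div_iff₀ (by linarith : (0:ℝ) < v - u)] at h2
    linarith
  have hfn_slope_low : ∀ u v, -1 ≤ u → u ≤ v → v ≤ y →
      fenchelNonneg H v - fenchelNonneg H u ≤ α * (v - u) := by
    intro u v hu1 huv hvy
    rcases eq_or_lt_of_le huv with rfl | hlt
    · simp
    have huy : u < y := lt_of_lt_of_le hlt hvy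
    have hv0 : v ≤ 0 := le_trans hvy hy0
    have hu0 : u ≤ 0 := by linarith
    have hsec := (fn_convex hlb).secant_mono (a := u) (x := v) (y := y)
      (mem_Iic.2 hu0) (mem_Iic.2 hv0) (mem_Iic.2 hy0) (ne_of_gt hlt) (ne_of_gt huy) hvy
    have h1 : (fenchelNonneg H y - fenchelNonneg H u) / (y - u) ≤ α := by
      rw [div_le_iff₀ (by linarith : (0:ℝ) < y - u)]
      have := hfn_sub u hu0
      nlinarith
    have h2 := le_trans hsec h1
    rw [div_le_iff₀ (by linarith : (0:ℝ) < v - u)] at h2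
    linarith
  set t : ℝ := 1 + y with htdef
  have ht0 : 0 ≤ t := by rw [htdef]; linarith
  have ht1 : t ≤ 1 := by rw [htdef]; linarith
  set T : Set ℝ := Ioc t 1 ∪ {1} with hTdef
  have hTmeas : MeasurableSet T := measurableSet_Ioc.union (measurableSet_singleton 1)
  have hTsub : T ⊆ Icc 0 1 := by
    intro x hx
    rcases hx with hx | hx
    · exact ⟨le_trans ht0 (le_of_lt hx.1), hx.2⟩
    · rw [mem_singleton_iff] at hx
      rw [hx]; exact ⟨by norm_num, le_rfl⟩
  have hQvol : ∀ B : Set ℝ, B ⊆ Icc 0 1 → Q B = volume B := by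
    intro B hB
    rw [hQdef, Measure.restrict_apply' measurableSet_Icc, inter_eq_self_of_subset_left hB]
  -- slope conditions for F
  have hslope_high : ∀ u v, t ≤ u → u ≤ v → v ≤ 1 → α * (v - u) ≤ F v - F u := by
    intro u v htu huv hv1
    have hu0 : 0 ≤ u := le_trans ht0 htu
    have hyu : y ≤ u - 1 := by rw [htdef] at htu; linarith
    rcases eq_or_lt_of_le hv1 with heq | hvlt
    · subst heq
      rcases eq_or_lt_of_le huv with rfl | hult
      · simp
      rw [hFapp, hFapp, Fcdf_of_ge le_rfl, Fcdf_of_mid hu0 hult]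
      have h := hfn_slope_high (u - 1) 0 hyu (by linarith) le_rfl
      have h2 := fn_nonpos hlb (le_refl (0:ℝ))
      nlinarith
    · rw [hFapp, hFapp, Fcdf_of_mid (le_trans hu0 huv) hvlt, Fcdf_of_mid hu0
        (lt_of_le_of_lt huv hvlt)]
      have h := hfn_slope_high (u - 1) (v - 1) hyu (by linarith) (by linarith)
      nlinarith
  have hslope_low : ∀ s : ℝ, s ≤ t → s < 1 → ∀ u v, 0 ≤ u → u ≤ v → v ≤ s →
      F v - F u ≤ α * (v - u) := by
    intro s hst hs1 u v hu0 huv hvs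
    have hv1 : v < 1 := lt_of_le_of_lt hvs hs1
    rw [hFapp, hFapp, Fcdf_of_mid hu0 (lt_of_le_of_lt huv hv1), Fcdf_of_mid
      (le_trans hu0 huv) hv1]
    have h := hfn_slope_low (u - 1) (v - 1) (by linarith) (by linarith)
      (by rw [htdef] at hst; linarith)
    nlinarith
  have hPlow : ∀ s : ℝ, 0 ≤ s → s ≤ t → s < 1 → ∀ B : Set ℝ, B ⊆ Ioc 0 s →
      P B ≤ ENNReal.ofReal α * volume B := by
    intro s hs0 hst hs1 B hB
    exact stieltjes_le_on F hα hs0 (fun x z hx hxz hzs => hslope_low s hst hs1 x z hx hxz hzs) hB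
  have hPhigh : ∀ B : Set ℝ, B ⊆ Ioc t 1 → ENNReal.ofReal α * volume B ≤ P B := by
    intro B hB
    exact stieltjes_ge_on F hα ht1 hslope_high hB
  have hT_ge : ∀ B : Set ℝ, B ⊆ T → ENNReal.ofReal α * Q B ≤ P B := by
    intro B hB
    rw [hQvol B (hB.trans hTsub)]
    rcases lt_or_eq_of_le ht1 with htlt | hteq
    · refine hPhigh B (hB.trans ?_)
      refine union_subset (subset_refl _) ?_
      intro x hx
      rw [mem_singleton_iff] at hx
      rw [hx]; exact ⟨htlt, le_rfl⟩
    · have hB1 : B ⊆ {1} := by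
        refine hB.trans ?_
        rw [hTdef, ← hteq, Ioc_self, empty_union]
      have hv0 : volume B = 0 :=
        le_antisymm (le_trans (measure_mono hB1) (by simp)) zero_le
      rw [hv0, mul_zero]
      exact zero_le
  have hPIic0 : P (Iic 0) = 0 := by
    rw [hPdef, StieltjesFunction.measure_Iic F (Fst_tendsto_atBot hlb h0), sub_zero, hFapp,
      Fcdf_of_mid le_rfl one_pos, show (0:ℝ) - 1 = -1 by ring, fn_of_le_neg_one hlb h0 le_rfl]
    simp
  have hPIoi1 : P (Ioi 1) = 0 := by
    have h1 : P (Iic 1) = 1 := by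
      rw [hPdef, StieltjesFunction.measure_Iic F (Fst_tendsto_atBot hlb h0), sub_zero, hFapp,
        Fcdf_of_ge le_rfl]
      simp
    have h2 : P (Iic 1)ᶜ = P univ - P (Iic 1) :=
      measure_compl measurableSet_Iic (measure_ne_top _ _)
    rw [← compl_Iic, h2, h1, measure_univ, tsub_self]
  have hR : ∀ B : Set ℝ, B ⊆ Tᶜ → P B ≤ ENNReal.ofReal α * Q B := by
    intro B hB
    set M : Set ℝ := Ioc 0 t \ {1} with hMdef
    have hMsub : M ⊆ Icc 0 1 := fun x hx => ⟨le_of_lt hx.1.1, le_trans hx.1.2 ht1⟩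
    have hBsub : B ⊆ Iic 0 ∪ (B ∩ M) ∪ Ioi 1 := by
      intro x hx
      rcases le_or_gt x 0 with h | h
      · exact Or.inl (Or.inl h)
      rcases le_or_gt x 1 with h1 | h1
      · have hxT : x ∈ Tᶜ := hB hx
        have hx1 : x ≠ 1 := by
          intro he
          exact hxT (Or.inr (by rw [he]; exact rfl))
        have hxt : x ≤ t := by
          by_contra hc
          push_neg at hc
          exact hxT (Or.inl ⟨hc, h1⟩)
        exact Or.inl (Or.inr ⟨hx, ⟨⟨h, hxt⟩, hx1⟩⟩)
      · exact Or.inr h1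
    have hkey : P (B ∩ M) ≤ ENNReal.ofReal α * volume (B ∩ M) := by
      rcases lt_or_eq_of_le ht1 with htlt | hteq
      · exact hPlow t ht0 le_rfl htlt _ (fun x hx => hx.2.1)
      · set C := B ∩ M with hCdef
        have hC : C ⊆ Ioo 0 1 := by
          intro x hx
          have h1 : x ∈ M := hx.2
          exact ⟨h1.1.1, lt_of_le_of_ne (le_trans h1.1.2 ht1) h1.2⟩
        have hsn : ∀ n : ℕ, (0:ℝ) ≤ 1 - 1/(n+1) := by
          intro n
          have h1 : (1:ℝ)/(n+1) ≤ 1 := by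
            rw [div_le_one (by positivity)]
            have := Nat.cast_nonneg (α := ℝ) n
            linarith
          linarith
        have hCun : C = ⋃ n : ℕ, C ∩ Ioc 0 (1 - 1/(n+1)) := by
          ext x
          constructor
          · intro hx
            obtain ⟨n, hn⟩ := exists_nat_one_div_lt (show (0:ℝ) < 1 - x by
              have := (hC hx).2; linarith)
            exact mem_iUnion.2 ⟨n, hx, ⟨(hC hx).1, by push_cast at hn ⊢; linarith⟩⟩
          · intro hx
            obtain ⟨n, hn⟩ := mem_iUnion.1 hx
            exact hn.1
        have hmono : Monotone (fun n : ℕ => C ∩ Ioc 0 (1 - 1/(n+1))) := by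
          intro m n hmn
          refine inter_subset_inter_right _ (Ioc_subset_Ioc_right ?_)
          have h1 : (1:ℝ)/(n+1) ≤ 1/(m+1) := by
            apply one_div_le_one_div_of_le (by positivity)
            have := Nat.cast_le (α := ℝ).2 hmn
            push_cast at this ⊢
            linarith
          linarith
        calc P C = P (⋃ n : ℕ, C ∩ Ioc 0 (1 - 1/(n+1))) := by rw [← hCun]
          _ = ⨆ n : ℕ, P (C ∩ Ioc 0 (1 - 1/((n:ℝ)+1))) :=
              hmono.directed_le.measure_iUnion
          _ ≤ ENNReal.ofReal α * volume C := by
              refine iSup_le fun n => ?_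
              have h1 : (1:ℝ) - 1/(n+1) < 1 := by
                have : (0:ℝ) < 1/(n+1) := by positivity
                linarith
              refine le_trans (hPlow (1 - 1/(n+1)) (hsn n) (by rw [← hteq] at h1 ⊢; linarith)
                h1 _ inter_subset_right) ?_
              exact mul_le_mul_right (measure_mono inter_subset_left) _
    calc P B ≤ P (Iic 0 ∪ (B ∩ M) ∪ Ioi 1) := measure_mono hBsub
      _ ≤ P (Iic 0 ∪ (B ∩ M)) + P (Ioi 1) := measure_union_le _ _
      _ ≤ P (Iic 0) + P (B ∩ M) + P (Ioi 1) :=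
          add_le_add_left (measure_union_le _ _) _
      _ = P (B ∩ M) := by rw [hPIic0, hPIoi1, zero_add, add_zero]
      _ = ENNReal.ofReal α * volume (B ∩ M) * 0 + P (B ∩ M) := by ring_nf
      _ ≤ ENNReal.ofReal α * volume (B ∩ M) := by
          rw [mul_zero, zero_add]
          exact hkey
      _ = ENNReal.ofReal α * Q (B ∩ M) := by
          rw [hQvol _ (inter_subset_right.trans hMsub)]
      _ ≤ ENNReal.ofReal α * Q B := mul_le_mul_right (measure_mono inter_subset_left) _
  -- values of P T and Q T
  have hfny_le : fenchelNonneg H y ≤ 0 := fn_nonpos hlb hy0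
  have hPQT : P T = ENNReal.ofReal (-(fenchelNonneg H y)) ∧
      Q T = ENNReal.ofReal (1 - t) := by
    rcases lt_or_eq_of_le ht1 with htlt | hteq
    · have hTeq : T = Ioc t 1 := by
        rw [hTdef]
        refine union_eq_self_of_subset_right ?_
        intro x hx
        rw [mem_singleton_iff] at hx
        rw [hx]; exact ⟨htlt, le_rfl⟩
      constructor
      · rw [hTeq, hPdef, StieltjesFunction.measure_Ioc, hFapp, hFapp, Fcdf_of_ge le_rfl,
          Fcdf_of_mid ht0 htlt, show t - 1 = y by rw [htdef]; ring]
        congr 1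
        ring
      · rw [hTeq, hQvol _ (hTeq ▸ hTsub), Real.volume_Ioc]
    · have hyz : y = 0 := by rw [htdef] at hteq; linarith
      have hTeq : T = {1} := by rw [hTdef, ← hteq, Ioc_self, empty_union]
      have hlim1 : Tendsto (fun x : ℝ => x - 1) (nhdsWithin 1 (Iio 1))
          (nhdsWithin 0 (Iio 0)) := by
        apply tendsto_nhdsWithin_of_tendsto_nhds_of_eventually_within
        · have h1 : Tendsto (fun x : ℝ => x - 1) (nhds 1) (nhds 0) := by
            have := (continuous_id.sub (continuous_const (y := (1:ℝ)))).tendsto (1:ℝ)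
            simpa [Pi.sub_def] using this
          exact h1.mono_left nhdsWithin_le_nhds
        · filter_upwards [self_mem_nhdsWithin] with x hx
          exact mem_Iio.2 (by have := mem_Iio.1 hx; linarith)
      have h2 := (fn_tendsto_zero hlb).comp hlim1
      have h3 : Tendsto (fun x : ℝ => 1 + fenchelNonneg H (x - 1)) (nhdsWithin 1 (Iio 1))
          (nhds (1 + fenchelNonneg H 0)) := tendsto_const_nhds.add h2
      have hFlim : Tendsto F (nhdsWithin 1 (Iio 1)) (nhds (1 + fenchelNonneg H 0)) := by
        refine h3.congr' ?_
        filter_upwards [nhdsWithin_le_nhds (Ioi_mem_nhds one_pos), self_mem_nhdsWithin]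
          with x hx0 hx1
        exact ((hFapp x).trans (Fcdf_of_mid (le_of_lt hx0) hx1)).symm
      have hleft : Function.leftLim F 1 = 1 + fenchelNonneg H 0 :=
        leftLim_eq_of_tendsto hFlim
      constructor
      · rw [hTeq, hPdef, StieltjesFunction.measure_singleton, hleft, hFapp, Fcdf_of_ge le_rfl,
          hyz]
        congr 1
        ring
      · have hsub1 : ({(1:ℝ)} : Set ℝ) ⊆ Icc 0 1 := by
          intro x hx
          rw [mem_singleton_iff] at hx
          rw [hx]
          exact ⟨by norm_num, le_rfl⟩
        have h4 : Q {(1:ℝ)} = 0 := by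
          rw [hQvol _ hsub1]
          exact measure_singleton 1
        rw [hTeq, h4, hteq]
        simp
  have hPT : (P T).toReal = -(fenchelNonneg H y) := by
    rw [hPQT.1, ENNReal.toReal_ofReal (by linarith)]
  have hQT : (Q T).toReal = 1 - t := by
    rw [hPQT.2, ENNReal.toReal_ofReal (by linarith)]
  have hval : (P T).toReal - α * (Q T).toReal = H α := by
    rw [hPT, hQT, hfs, show (1:ℝ) - t = -y by rw [htdef]; ring]
    ring
  refine le_antisymm ?_ ?_
  · refine hockeyStick_le α P Q ?_
    intro A hA
    rw [← hval]
    have eAT : A ∩ T = T ∩ A := inter_comm A T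
    have hsplitP : (P A).toReal = (P (T ∩ A)).toReal + (P (A \ T)).toReal := by
      rw [← ENNReal.toReal_add (measure_ne_top _ _) (measure_ne_top _ _), ← eAT,
        measure_inter_add_diff A hTmeas]
    have hsplitQ : (Q A).toReal = (Q (T ∩ A)).toReal + (Q (A \ T)).toReal := by
      rw [← ENNReal.toReal_add (measure_ne_top _ _) (measure_ne_top _ _), ← eAT,
        measure_inter_add_diff A hTmeas]
    have hsplitPT : (P T).toReal = (P (T ∩ A)).toReal + (P (T \ A)).toReal := by
      rw [← ENNReal.toReal_add (measure_ne_top _ _) (measure_ne_top _ _),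
        measure_inter_add_diff T hA]
    have hsplitQT : (Q T).toReal = (Q (T ∩ A)).toReal + (Q (T \ A)).toReal := by
      rw [← ENNReal.toReal_add (measure_ne_top _ _) (measure_ne_top _ _),
        measure_inter_add_diff T hA]
    have hAR : (P (A \ T)).toReal ≤ α * (Q (A \ T)).toReal := by
      have h := hR (A \ T) (fun x hx => hx.2)
      have h2 := ENNReal.toReal_mono
        (ENNReal.mul_ne_top ENNReal.ofReal_ne_top (measure_ne_top _ _)) h
      rwa [ENNReal.toReal_mul, ENNReal.toReal_ofReal hα] at h2
    have hTA : α * (Q (T \ A)).toReal ≤ (P (T \ A)).toReal := by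
      have h := hT_ge (T \ A) diff_subset
      have h2 := ENNReal.toReal_mono (measure_ne_top _ _) h
      rwa [ENNReal.toReal_mul, ENNReal.toReal_ofReal hα] at h2
    have hq1 : α * (Q A).toReal = α * (Q (T ∩ A)).toReal + α * (Q (A \ T)).toReal := by
      rw [hsplitQ]; ring
    have hq2 : α * (Q T).toReal = α * (Q (T ∩ A)).toReal + α * (Q (T \ A)).toReal := by
      rw [hsplitQT]; ring
    linarith
  · have h := le_hockeyStick α P Q T hTmeas
    rw [hval] at h
    exact h
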